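/- arXiv:0912.3089 — 7 statements merged into one kernel-verified Lean document; each statement's English description precedes it below -/
import Mathlib

section
/- Let G > 0, B ≥ 0, and consider max over π ≥ 0 of min(π·G·e^{−(1+π)}, π·B). If B ≥ G·e^{−2}, the maximum is attained at π* = 1 with value G·e^{−2}. If 0 < B < G·e^{−2}, the maximum is attained at π* = ln(G/B) − 1 with value B·(ln(G/B) − 1). -/
private lemma key_bound (x : ℝ) : x * Real.exp (-(1 + x)) ≤ Real.exp (-2) := by
  have h1 : x ≤ Real.exp (x - 1) := by
    have := Real.add_one_le_exp (x - 1)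
    linarith
  calc x * Real.exp (-(1 + x)) ≤ Real.exp (x - 1) * Real.exp (-(1 + x)) := by
        exact mul_le_mul_of_nonneg_right h1 (Real.exp_pos _).le
    _ = Real.exp (-2) := by rw [← Real.exp_add]; ring_nf

private lemma decr_bound (s t : ℝ) (hs : 1 ≤ s) (hst : s ≤ t) :
    t * Real.exp (-t) ≤ s * Real.exp (-s) := by
  have h1 : t ≤ s * Real.exp (t - s) := by
    have h2 := Real.add_one_le_exp (t - s)
    have h3 : s * (t - s + 1) ≤ s * Real.exp (t - s) :=
      mul_le_mul_of_nonneg_left h2 (by linarith)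
    nlinarith
  calc t * Real.exp (-t) ≤ (s * Real.exp (t - s)) * Real.exp (-t) :=
        mul_le_mul_of_nonneg_right h1 (Real.exp_pos _).le
    _ = s * Real.exp (-s) := by rw [mul_assoc, ← Real.exp_add]; ring_nf

/-- Optimal pricing: maximizing `min(π·G·e^{−(1+π)}, π·B)` over `π ≥ 0`.
If `B ≥ G·e^{−2}` the maximum is at `π* = 1` with value `G·e^{−2}`;
if `0 < B < G·e^{−2}` it is at `π* = ln(G/B) − 1` with value `B·(ln(G/B) − 1)`. -/
theorem stmt_4 (G B : ℝ) (hG : 0 < G) (hB : 0 ≤ B) :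
    (B ≥ G * Real.exp (-2) →
      IsMaxOn (fun π : ℝ => min (π * G * Real.exp (-(1 + π))) (π * B))
        (Set.Ici (0 : ℝ)) 1 ∧
      min ((1 : ℝ) * G * Real.exp (-(1 + 1))) ((1 : ℝ) * B) = G * Real.exp (-2)) ∧
    (0 < B → B < G * Real.exp (-2) →
      IsMaxOn (fun π : ℝ => min (π * G * Real.exp (-(1 + π))) (π * B))
        (Set.Ici (0 : ℝ)) (Real.log (G / B) - 1) ∧
      min ((Real.log (G / B) - 1) * G * Real.exp (-(1 + (Real.log (G / B) - 1))))
          ((Real.log (G / B) - 1) * B) = B * (Real.log (G / B) - 1)) := by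
  constructor
  · intro hBge
    have hval : min ((1 : ℝ) * G * Real.exp (-(1 + 1))) ((1 : ℝ) * B) = G * Real.exp (-2) := by
      rw [min_eq_left]
      · norm_num
      · norm_num; linarith
    refine ⟨?_, hval⟩
    intro x hx
    simp only [Set.mem_setOf_eq, hval]
    have h1 : x * G * Real.exp (-(1 + x)) ≤ G * Real.exp (-2) := by
      have := key_bound x
      calc x * G * Real.exp (-(1 + x)) = G * (x * Real.exp (-(1 + x))) := by ring
        _ ≤ G * Real.exp (-2) := mul_le_mul_of_nonneg_left this hG.le
    exact le_trans (min_le_left _ _) h1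
  · intro hBpos hBlt
    set p := Real.log (G / B) - 1 with hp
    have hGB : (1 : ℝ) < G / B := by
      rw [lt_div_iff₀ hBpos]
      have h2 : Real.exp (-2) < 1 := by
        rw [← Real.exp_zero]; exact Real.exp_lt_exp.mpr (by norm_num)
      nlinarith [Real.exp_pos (-2)]
    have hlog2 : 2 < Real.log (G / B) := by
      have : Real.exp 2 < G / B := by
        rw [show Real.exp 2 = (Real.exp (-2))⁻¹ by rw [← Real.exp_neg]; norm_num,
          lt_div_iff₀ hBpos, inv_mul_eq_div, div_lt_iff₀ (Real.exp_pos _)]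
        linarith
      calc (2:ℝ) = Real.log (Real.exp 2) := (Real.log_exp 2).symm
        _ < Real.log (G / B) := Real.log_lt_log (Real.exp_pos 2) this
    have hp1 : 1 < p := by rw [hp]; linarith
    -- key: G * exp(-(1+p)) = B
    have hkey : G * Real.exp (-(1 + p)) = B := by
      have : -(1 + p) = -Real.log (G / B) := by rw [hp]; ring
      rw [this, Real.exp_neg, Real.exp_log (by positivity : (0:ℝ) < G / B)]
      field_simp
    have hval : min (p * G * Real.exp (-(1 + p))) (p * B) = B * p := by
      rw [mul_assoc, hkey, min_self, mul_comm]
    refine ⟨?_, hval⟩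
    intro x hx
    simp only [Set.mem_setOf_eq, hval]
    have hx0 : (0:ℝ) ≤ x := hx
    rcases le_or_gt x p with h | h
    · calc min (x * G * Real.exp (-(1 + x))) (x * B) ≤ x * B := min_le_right _ _
        _ ≤ p * B := mul_le_mul_of_nonneg_right h hB
        _ = B * p := mul_comm _ _
    · have hd := decr_bound p x hp1.le h.le
      have : x * G * Real.exp (-(1 + x)) ≤ B * p := by
        have e1 : ∀ y : ℝ, Real.exp (-(1 + y)) = Real.exp (-1) * Real.exp (-y) := by
          intro y; rw [← Real.exp_add]; ring_nf
        calc x * G * Real.exp (-(1 + x)) = G * Real.exp (-1) * (x * Real.exp (-x)) := by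
              rw [e1]; ring
          _ ≤ G * Real.exp (-1) * (p * Real.exp (-p)) :=
              mul_le_mul_of_nonneg_left hd (by positivity)
          _ = (G * Real.exp (-(1 + p))) * p := by rw [e1]; ring
          _ = B * p := by rw [hkey]
      exact le_trans (min_le_left _ _) this
end

section
/- Given sensing result B_s·α with 0 ≤ B_s·α ≤ G·e^{−2}, the leasing amount maximizing R(B_l) = (B_l + B_s·α)·ln(G/(B_l + B_s·α)) − B_s·(α + C_s) − B_l·(1 + C_l) over 0 ≤ B_l ≤ G·e^{−2} − B_s·α is B_l* = max(G·e^{−(2+C_l)} − B_s·α, 0). -/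
lemma aux_log_7 (a b : ℝ) (ha : 0 < a) (hb : 0 < b) :
    b * Real.log (a / b) ≤ a - b := by
  have h := Real.log_le_sub_one_of_pos (show 0 < a / b by positivity)
  have h2 : b * (a / b - 1) = a - b := by field_simp
  nlinarith [mul_le_mul_of_nonneg_left h hb.le]

lemma key_7 (G Cl a b : ℝ) (hG : 0 < G) (ha : 0 < a) (hb : 0 < b) :
    b * Real.log (G / b) - b * (1 + Cl) ≤
      a * Real.log (G / a) - a * (1 + Cl) +
        (Real.log G - Real.log a - (2 + Cl)) * (b - a) := by
  rw [Real.log_div hG.ne' hb.ne', Real.log_div hG.ne' ha.ne']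
  have h := aux_log_7 a b ha hb
  rw [Real.log_div ha.ne' hb.ne'] at h
  nlinarith

/-- Given sensing result `B_s·α` with `0 ≤ B_s·α ≤ G·e^{−2}`, the leasing amount
maximizing the conservative-supply profit over `0 ≤ B_l ≤ G·e^{−2} − B_s·α` is
`B_l* = max(G·e^{−(2+C_l)} − B_s·α, 0)`. -/
theorem stmt_7 (G Cl Cs Bs α : ℝ) (hG : 0 < G) (hCl : 0 < Cl) (hCs : 0 < Cs)
    (hBsα : 0 ≤ Bs * α) (hup : Bs * α ≤ G * Real.exp (-2)) :
    IsMaxOn (fun Bl => (Bl + Bs * α) * Real.log (G / (Bl + Bs * α)) -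
        Bs * (α + Cs) - Bl * (1 + Cl))
      (Set.Icc (0 : ℝ) (G * Real.exp (-2) - Bs * α))
      (max (G * Real.exp (-(2 + Cl)) - Bs * α) 0) := by
  rw [isMaxOn_iff]
  intro x hx
  simp only [Set.mem_Icc] at hx
  obtain ⟨hx0, hx1⟩ := hx
  set c := Bs * α with hc
  set t0 := G * Real.exp (-(2 + Cl)) with ht0
  have ht0pos : 0 < t0 := by positivity
  have hlogt0 : Real.log t0 = Real.log G - (2 + Cl) := by
    rw [ht0, Real.log_mul hG.ne' (Real.exp_ne_zero _), Real.log_exp]; ring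
  set m := max t0 c with hm
  have hMm : max (t0 - c) 0 = m - c := by
    rw [hm, ← max_sub_sub_right t0 c c, sub_self]
  have hmain : (x + c) * Real.log (G / (x + c)) - (x + c) * (1 + Cl) ≤
      m * Real.log (G / m) - m * (1 + Cl) := by
    rcases eq_or_lt_of_le (by linarith : (0:ℝ) ≤ x + c) with h0 | hxc
    · -- x + c = 0
      have hx' : x + c = 0 := h0.symm
      have hxz : x = 0 := by linarith
      have hcz : c = 0 := by linarith
      have hmt0 : m = t0 := by rw [hm, hcz]; exact max_eq_left ht0pos.le
      rw [hx', hmt0, Real.log_div hG.ne' ht0pos.ne', hlogt0]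
      simp only [div_zero, Real.log_zero, mul_zero, zero_mul, zero_sub]
      nlinarith
    · rcases le_total c t0 with hct | htc
      · have hmt0 : m = t0 := max_eq_left hct
        have hk := key_7 G Cl t0 (x + c) hG ht0pos hxc
        rw [hmt0]
        have : Real.log G - Real.log t0 - (2 + Cl) = 0 := by rw [hlogt0]; ring
        nlinarith
      · have hcpos : 0 < c := lt_of_lt_of_le ht0pos htc
        have hmc : m = c := max_eq_right htc
        have hk := key_7 G Cl c (x + c) hG hcpos hxc
        have hcoef : Real.log G - Real.log c - (2 + Cl) ≤ 0 := by
          have := Real.log_le_log ht0pos htc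
          linarith [hlogt0 ▸ this]
        have hprod : (Real.log G - Real.log c - (2 + Cl)) * (x + c - c) ≤ 0 :=
          mul_nonpos_of_nonpos_of_nonneg hcoef (by linarith)
        rw [hmc]
        linarith
  have hmceq : m - c + c = m := by ring
  rw [hMm, hmceq]
  nlinarith [hmain]
end

section
/- For α uniformly distributed on [0,1] and B_s ∈ (G·e^{−(2+C_l)}, G·e^{−2}], the expected Stage-II profit R₂(B_s) = (B_s/2)·ln(G/B_s) − B_s/4 + (B_s/4)·(G·e^{−(2+C_l)}/B_s)² − B_s·C_s is strictly concave in B_s, with second derivative (1/(2B_s))·[(G·e^{−(2+C_l)}/B_s)² − 1] < 0. -/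
open Real Set Filter


/-- For `B_s ∈ (G·e^{−(2+C_l)}, G·e^{−2}]`, the expected Stage-II profit
`R₂(B_s) = (B_s/2)·ln(G/B_s) − B_s/4 + (B_s/4)·(G·e^{−(2+C_l)}/B_s)² − B_s·C_s`
is strictly concave, with second derivative
`(1/(2B_s))·[(G·e^{−(2+C_l)}/B_s)² − 1] < 0`. -/
theorem stmt_10 (G Cl Cs : ℝ) (hG : 0 < G) (hCl : 0 < Cl) (hCs : 0 < Cs) :
    StrictConcaveOn ℝ (Set.Ioc (G * Real.exp (-(2 + Cl))) (G * Real.exp (-2)))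
      (fun Bs => Bs / 2 * Real.log (G / Bs) - Bs / 4 +
        Bs / 4 * (G * Real.exp (-(2 + Cl)) / Bs) ^ 2 - Bs * Cs) ∧
    ∀ Bs ∈ Set.Ioc (G * Real.exp (-(2 + Cl))) (G * Real.exp (-2)),
      deriv (deriv (fun Bs => Bs / 2 * Real.log (G / Bs) - Bs / 4 +
          Bs / 4 * (G * Real.exp (-(2 + Cl)) / Bs) ^ 2 - Bs * Cs)) Bs =
        1 / (2 * Bs) * ((G * Real.exp (-(2 + Cl)) / Bs) ^ 2 - 1) ∧
      1 / (2 * Bs) * ((G * Real.exp (-(2 + Cl)) / Bs) ^ 2 - 1) < 0 := by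
  set a := G * Real.exp (-(2 + Cl)) with ha_def
  set b := G * Real.exp (-(2:ℝ)) with hb_def
  have ha : 0 < a := by positivity
  have hab : a < b := by
    apply mul_lt_mul_of_pos_left _ hG
    exact Real.exp_lt_exp.mpr (by linarith)
  set f : ℝ → ℝ := fun Bs => Bs / 2 * Real.log (G / Bs) - Bs / 4 +
        Bs / 4 * (a / Bs) ^ 2 - Bs * Cs with hf_def
  set g : ℝ → ℝ := fun x => x / 2 * (Real.log G - Real.log x) - x / 4 +
        a ^ 2 / 4 * x⁻¹ - x * Cs with hg_def
  have hfg : ∀ x ∈ Ioi (0:ℝ), f x = g x := by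
    intro x hx
    have hx0 : (x:ℝ) ≠ 0 := ne_of_gt hx
    simp only [hf_def, hg_def]
    rw [Real.log_div (ne_of_gt hG) hx0]
    field_simp
  set D1 : ℝ → ℝ := fun x => (Real.log G - Real.log x) / 2 - 3/4 -
      a ^ 2 / 4 * (x⁻¹) ^ 2 - Cs with hD1_def
  have hg' : ∀ x : ℝ, 0 < x → HasDerivAt g (D1 x) x := by
    intro x hx
    have hx0 : (x:ℝ) ≠ 0 := ne_of_gt hx
    have h1 : HasDerivAt (fun y : ℝ => y / 2 * (Real.log G - Real.log y))
        (1 / 2 * (Real.log G - Real.log x) + x / 2 * (0 - x⁻¹)) x :=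
      ((hasDerivAt_id x).div_const 2).mul
        ((hasDerivAt_const x (Real.log G)).sub (Real.hasDerivAt_log hx0))
    have h2 : HasDerivAt (fun y : ℝ => y / 4) (1 / 4) x := (hasDerivAt_id x).div_const 4
    have h3 : HasDerivAt (fun y : ℝ => a ^ 2 / 4 * y⁻¹) (a ^ 2 / 4 * (-(x ^ 2)⁻¹)) x :=
      (hasDerivAt_inv hx0).const_mul _
    have h4 : HasDerivAt (fun y : ℝ => y * Cs) Cs x := hasDerivAt_mul_const Cs
    have := ((h1.sub h2).add h3).sub h4
    refine HasDerivAt.congr_deriv this ?_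
    simp only [hD1_def, inv_pow]
    field_simp
    ring
  have hderiv_f : ∀ x ∈ Ioi (0:ℝ), deriv f x = D1 x := by
    intro x hx
    have he : f =ᶠ[nhds x] g := eventually_of_mem (isOpen_Ioi.mem_nhds hx) hfg
    rw [he.deriv_eq, (hg' x hx).deriv]
  have hD1' : ∀ x : ℝ, 0 < x →
      HasDerivAt D1 (1 / (2 * x) * ((a / x) ^ 2 - 1)) x := by
    intro x hx
    have hx0 : (x:ℝ) ≠ 0 := ne_of_gt hx
    have h1 : HasDerivAt (fun y : ℝ => (Real.log G - Real.log y) / 2) ((0 - x⁻¹) / 2) x :=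
      ((hasDerivAt_const x (Real.log G)).sub (Real.hasDerivAt_log hx0)).div_const 2
    have h2 : HasDerivAt (fun y : ℝ => a ^ 2 / 4 * (y⁻¹) ^ 2)
        (a ^ 2 / 4 * ((2:ℕ) * (x⁻¹) ^ (2 - 1) * (-(x ^ 2)⁻¹))) x :=
      ((hasDerivAt_inv hx0).pow 2).const_mul _
    have h := ((h1.sub (hasDerivAt_const x (3/4 : ℝ))).sub h2).sub
      (hasDerivAt_const x Cs)
    refine HasDerivAt.congr_deriv h ?_
    simp only [hD1_def, inv_pow]
    field_simp
    ring
  have hderiv2 : ∀ x ∈ Ioi (0:ℝ),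
      deriv (deriv f) x = 1 / (2 * x) * ((a / x) ^ 2 - 1) := by
    intro x hx
    have he : deriv f =ᶠ[nhds x] D1 := eventually_of_mem (isOpen_Ioi.mem_nhds hx) hderiv_f
    rw [he.deriv_eq, (hD1' x hx).deriv]
  have hneg : ∀ x ∈ Ioc a b, 1 / (2 * x) * ((a / x) ^ 2 - 1) < 0 := by
    intro x hx
    have hxa : a < x := hx.1
    have hx0 : 0 < x := ha.trans hxa
    have h1 : 0 < 1 / (2 * x) := by positivity
    have h2 : a / x < 1 := (div_lt_one hx0).mpr hxa
    have h3 : (a / x) ^ 2 < 1 := by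
      have := pow_lt_one₀ (by positivity : (0:ℝ) ≤ a / x) h2 (two_ne_zero)
      simpa using this
    exact mul_neg_of_pos_of_neg h1 (by linarith)
  have hsub : Ioc a b ⊆ Ioi (0:ℝ) := fun x hx => ha.trans hx.1
  constructor
  · apply strictConcaveOn_of_deriv2_neg (convex_Ioc a b)
    · intro x hx
      exact ((hg' x (hsub hx)).continuousAt.continuousWithinAt).congr
        (fun y hy => hfg y (hsub hy)) (hfg x (hsub hx))
    · intro x hx
      rw [interior_Ioc] at hx
      have hx' : x ∈ Ioc a b := Ioo_subset_Ioc_self hx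
      show deriv (deriv f) x < 0
      rw [hderiv2 x (hsub hx')]
      exact hneg x hx'
  · intro x hx
    exact ⟨hderiv2 x (hsub hx), hneg x hx⟩
end

section
/- If C_s ∈ [(1 − e^{−2C_l})/4, C_l/2], the equation (1/2)·ln(G/B_s) − 3/4 − C_s − (G·e^{−(2+C_l)}/(2B_s))² = 0 has a unique solution B_s^{L*} in the interval [G·e^{−(2+C_l)}, G·e^{−2}], and B_s^{L*} is linear (homogeneous of degree 1) in G. -/
open Real Set

/-- If `C_s ∈ [(1 − e^{−2C_l})/4, C_l/2]`, the first-order condition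
`(1/2)·ln(G/B_s) − 3/4 − C_s − (G·e^{−(2+C_l)}/(2B_s))² = 0` has a unique solution
`B_s^{L*}` in `[G·e^{−(2+C_l)}, G·e^{−2}]`, and this solution is homogeneous of
degree 1 in `G`. -/
theorem stmt_12 (G Cl Cs : ℝ) (hG : 0 < G) (hCl : 0 < Cl)
    (hCs1 : (1 - Real.exp (-(2 * Cl))) / 4 ≤ Cs) (hCs2 : Cs ≤ Cl / 2) :
    (∃! Bs : ℝ, Bs ∈ Set.Icc (G * Real.exp (-(2 + Cl))) (G * Real.exp (-2)) ∧
      1 / 2 * Real.log (G / Bs) - 3 / 4 - Cs -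
        (G * Real.exp (-(2 + Cl)) / (2 * Bs)) ^ 2 = 0) ∧
    ∀ t > (0 : ℝ), ∀ Bs : ℝ,
      (Bs ∈ Set.Icc (G * Real.exp (-(2 + Cl))) (G * Real.exp (-2)) ∧
        1 / 2 * Real.log (G / Bs) - 3 / 4 - Cs -
          (G * Real.exp (-(2 + Cl)) / (2 * Bs)) ^ 2 = 0) →
      (t * Bs ∈ Set.Icc (t * G * Real.exp (-(2 + Cl))) (t * G * Real.exp (-2)) ∧
        1 / 2 * Real.log (t * G / (t * Bs)) - 3 / 4 - Cs -
          (t * G * Real.exp (-(2 + Cl)) / (2 * (t * Bs))) ^ 2 = 0) := by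
  set a := G * Real.exp (-(2 + Cl)) with ha_def
  set b := G * Real.exp (-2) with hb_def
  have ha : 0 < a := mul_pos hG (Real.exp_pos _)
  have hb : 0 < b := mul_pos hG (Real.exp_pos _)
  have hab : a < b := by
    apply mul_lt_mul_of_pos_left _ hG
    exact Real.exp_lt_exp.2 (by linarith)
  -- the rewritten function
  set g : ℝ → ℝ := fun x => 1 / 2 * (Real.log G - Real.log x) - 3 / 4 - Cs
      - a ^ 2 / 4 * (x ^ 2)⁻¹ with hg_def
  -- equality of f and g at positive points
  have hfg : ∀ x : ℝ, 0 < x →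
      1 / 2 * Real.log (G / x) - 3 / 4 - Cs - (a / (2 * x)) ^ 2 = g x := by
    intro x hx
    rw [hg_def]
    rw [Real.log_div hG.ne' hx.ne']
    field_simp
    ring
  -- continuity of g on Icc a b
  have hgc : ContinuousOn g (Icc a b) := by
    apply ContinuousOn.sub
    · apply ContinuousOn.sub
      · apply ContinuousOn.sub
        · apply ContinuousOn.mul continuousOn_const
          apply ContinuousOn.sub continuousOn_const
          apply Real.continuousOn_log.comp continuousOn_id
          intro x hx
          exact ne_of_gt (lt_of_lt_of_le ha hx.1)
        · exact continuousOn_const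
      · exact continuousOn_const
    · apply ContinuousOn.mul continuousOn_const
      apply ContinuousOn.inv₀ (by fun_prop)
      intro x hx
      exact pow_ne_zero _ (ne_of_gt (lt_of_lt_of_le ha hx.1))
  -- derivative of g
  have hderiv : ∀ x ∈ interior (Icc a b), HasDerivAt g (-(1 / (2 * x)) + a ^ 2 / (2 * x ^ 3)) x := by
    intro x hx
    rw [interior_Icc] at hx
    have hx0 : 0 < x := lt_trans ha hx.1
    have h1 : HasDerivAt (fun x : ℝ => Real.log x) x⁻¹ x := Real.hasDerivAt_log hx0.ne'
    have h2 : HasDerivAt (fun x : ℝ => (x ^ 2)⁻¹) (-(2 * x) / (x ^ 2) ^ 2) x := by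
      have := (hasDerivAt_pow 2 x).inv (pow_ne_zero 2 hx0.ne')
      simp only [Pi.inv_def] at this
      refine this.congr_deriv ?_
      norm_num
    have : HasDerivAt g (1 / 2 * (0 - x⁻¹) - 0 - 0 - a ^ 2 / 4 * (-(2 * x) / (x ^ 2) ^ 2)) x := by
      exact ((((hasDerivAt_const x (Real.log G)).sub h1).const_mul (1/2 : ℝ)).sub
        (hasDerivAt_const x ((3:ℝ)/4))).sub (hasDerivAt_const x Cs) |>.sub (h2.const_mul _)
    convert this using 1
    field_simp
    ring
  have hganti : StrictAntiOn g (Icc a b) := by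
    apply strictAntiOn_of_deriv_neg (convex_Icc a b) hgc
    intro x hx
    rw [(hderiv x hx).deriv]
    rw [interior_Icc] at hx
    have hx0 : 0 < x := lt_trans ha hx.1
    have hax : a < x := hx.1
    have : a ^ 2 < x ^ 2 := by nlinarith
    rw [neg_add_eq_sub, sub_neg]
    rw [div_lt_div_iff₀ (by positivity) (by positivity)]
    nlinarith
  -- values at endpoints
  have hga : g a = Cl / 2 - Cs := by
    rw [hg_def]
    simp only
    rw [ha_def, Real.log_mul hG.ne' (Real.exp_pos _).ne', Real.log_exp]
    field_simp
    ring
  have hratio : a / b = Real.exp (-Cl) := by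
    rw [ha_def, hb_def, mul_div_mul_left _ _ hG.ne', ← Real.exp_sub]
    ring_nf
  have h4 : a ^ 2 * (b ^ 2)⁻¹ = Real.exp (-(2 * Cl)) := by
    have : a ^ 2 * (b ^ 2)⁻¹ = (a / b) ^ 2 := by
      rw [div_pow, div_eq_mul_inv]
    rw [this, hratio, sq, ← Real.exp_add]; ring_nf
  have hgb : g b = 1 / 4 - Cs - Real.exp (-(2 * Cl)) / 4 := by
    rw [hg_def]
    simp only
    rw [show Real.log b = Real.log G + (-2) by
      rw [hb_def, Real.log_mul hG.ne' (Real.exp_pos _).ne', Real.log_exp]]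
    rw [show a ^ 2 / 4 * ((b:ℝ) ^ 2)⁻¹ = a ^ 2 * (b ^ 2)⁻¹ / 4 by ring, h4]
    ring
  have hga0 : 0 ≤ g a := by rw [hga]; linarith
  have hgb0 : g b ≤ 0 := by rw [hgb]; linarith
  -- existence via IVT
  obtain ⟨c, hc, hgc0⟩ := intermediate_value_Icc' (le_of_lt hab) hgc ⟨hgb0, hga0⟩
  have hc0 : 0 < c := lt_of_lt_of_le ha hc.1
  constructor
  · refine ⟨c, ⟨hc, by rw [hfg c hc0, hgc0]⟩, ?_⟩
    intro y ⟨hy, hy0⟩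
    have hy0' : g y = 0 := by rw [← hfg y (lt_of_lt_of_le ha hy.1)]; exact hy0
    rcases lt_trichotomy y c with h | h | h
    · exfalso; have := hganti hy hc h; linarith
    · exact h
    · exfalso; have := hganti hc hy h; linarith
  · rintro t ht Bs ⟨hBs, heq⟩
    have hBs0 : 0 < Bs := lt_of_lt_of_le ha hBs.1
    constructor
    · constructor
      · calc t * G * Real.exp (-(2 + Cl)) = t * a := by rw [ha_def]; ring
          _ ≤ t * Bs := by exact mul_le_mul_of_nonneg_left hBs.1 ht.le
      · calc t * Bs ≤ t * b := mul_le_mul_of_nonneg_left hBs.2 ht.le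
          _ = t * G * Real.exp (-2) := by rw [hb_def]; ring
    · have e1 : t * G / (t * Bs) = G / Bs := mul_div_mul_left G Bs ht.ne'
      have e2 : t * G * Real.exp (-(2 + Cl)) / (2 * (t * Bs)) = a / (2 * Bs) := by
        rw [ha_def]; field_simp
      rw [e1, e2]; exact heq
end

section
/- In the low sensing cost regime, the realized profit as a function of α, given by R(α) = G·e^{−(2+C_l)} − B_s^{L*}·C_s + B_s^{L*}·α·C_l for α ≤ G·e^{−(2+C_l)}/B_s^{L*} and R(α) = B_s^{L*}·α·(ln(G/(B_s^{L*}·α)) − 1) − B_s^{L*}·C_s for α ≥ G·e^{−(2+C_l)}/B_s^{L*}, is continuous and strictly increasing on (0, 1], using that B_s^{L*} ≤ G·e^{−2}. -/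
/-- In the low sensing cost regime, the realized profit
`R(α) = G·e^{−(2+C_l)} − B_s^{L*}·C_s + B_s^{L*}·α·C_l` for
`α ≤ G·e^{−(2+C_l)}/B_s^{L*}` and
`R(α) = B_s^{L*}·α·(ln(G/(B_s^{L*}·α)) − 1) − B_s^{L*}·C_s` otherwise,
is continuous and strictly increasing on `(0,1]`. -/
theorem stmt_13 (G Cl Cs Bs : ℝ) (hG : 0 < G) (hCl : 0 < Cl) (hCs : 0 < Cs)
    (hBs : Bs ∈ Set.Icc (G * Real.exp (-(2 + Cl))) (G * Real.exp (-2))) :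
    ContinuousOn (fun α : ℝ =>
        if α ≤ G * Real.exp (-(2 + Cl)) / Bs then
          G * Real.exp (-(2 + Cl)) - Bs * Cs + Bs * α * Cl
        else Bs * α * (Real.log (G / (Bs * α)) - 1) - Bs * Cs)
      (Set.Ioc (0 : ℝ) 1) ∧
    StrictMonoOn (fun α : ℝ =>
        if α ≤ G * Real.exp (-(2 + Cl)) / Bs then
          G * Real.exp (-(2 + Cl)) - Bs * Cs + Bs * α * Cl
        else Bs * α * (Real.log (G / (Bs * α)) - 1) - Bs * Cs)
      (Set.Ioc (0 : ℝ) 1) := by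
  obtain ⟨hBs1, hBs2⟩ := hBs
  have hE : 0 < G * Real.exp (-(2 + Cl)) := by positivity
  have hBpos : 0 < Bs := lt_of_lt_of_le hE hBs1
  set t : ℝ := G * Real.exp (-(2 + Cl)) / Bs with ht
  set L : ℝ → ℝ := fun α => G * Real.exp (-(2 + Cl)) - Bs * Cs + Bs * α * Cl with hL
  set h : ℝ → ℝ := fun α => Bs * α * (Real.log (G / (Bs * α)) - 1) - Bs * Cs with hh0
  set f : ℝ → ℝ := fun α => if α ≤ t then L α else h α with hfdef
  have htpos : 0 < t := div_pos hE hBpos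
  have hBt : Bs * t = G * Real.exp (-(2 + Cl)) := by
    rw [ht]; field_simp [hBpos.ne']
  have hlogt : Real.log (G / (Bs * t)) = 2 + Cl := by
    rw [hBt]
    have : G / (G * Real.exp (-(2 + Cl))) = Real.exp (2 + Cl) := by
      rw [Real.exp_neg]
      field_simp
    rw [this, Real.log_exp]
  have hLt : L t = h t := by
    show G * Real.exp (-(2 + Cl)) - Bs * Cs + Bs * t * Cl
        = Bs * t * (Real.log (G / (Bs * t)) - 1) - Bs * Cs
    rw [hlogt, hBt]; ring
  have hdL : ∀ x : ℝ, HasDerivAt L (Bs * Cl) x := by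
    intro x
    have : HasDerivAt (fun α : ℝ => Bs * α) Bs x := by
      simpa using (hasDerivAt_id x).const_mul Bs
    simpa [hL] using ((this.mul_const Cl).const_add (G * Real.exp (-(2 + Cl)) - Bs * Cs))
  have hdh : ∀ x : ℝ, x ≠ 0 → HasDerivAt h (Bs * (Real.log (G / (Bs * x)) - 2)) x := by
    intro x hx
    have hBx : Bs * x ≠ 0 := mul_ne_zero hBpos.ne' hx
    have d1 : HasDerivAt (fun α : ℝ => Bs * α) Bs x := by
      simpa using (hasDerivAt_id x).const_mul Bs
    have d2 : HasDerivAt (fun α : ℝ => (Bs * α) * Real.log (Bs * α))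
        ((Real.log (Bs * x) + 1) * Bs) x := (Real.hasDerivAt_mul_log hBx).comp x d1
    have d3 : HasDerivAt
        (fun α : ℝ => Bs * α * Real.log G - (Bs * α) * Real.log (Bs * α) - Bs * α - Bs * Cs)
        (Bs * Real.log G - (Real.log (Bs * x) + 1) * Bs - Bs) x :=
      (((d1.mul_const (Real.log G)).sub d2).sub d1).sub_const (Bs * Cs)
    have heq : h =ᶠ[nhds x]
        (fun α : ℝ => Bs * α * Real.log G - (Bs * α) * Real.log (Bs * α) - Bs * α - Bs * Cs) := by
      filter_upwards [isOpen_ne.mem_nhds hx] with a ha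
      have hla : Real.log (G / (Bs * a)) = Real.log G - Real.log (Bs * a) :=
        Real.log_div hG.ne' (mul_ne_zero hBpos.ne' ha)
      simp only [hh0, hla]; ring
    have := d3.congr_of_eventuallyEq heq
    exact this.congr_deriv (by rw [Real.log_div hG.ne' hBx]; ring)
  -- derivative of f
  have key : ∀ x ∈ Set.Ioc (0 : ℝ) 1,
      HasDerivAt f (if x ≤ t then Bs * Cl else Bs * (Real.log (G / (Bs * x)) - 2)) x := by
    intro x hx
    rcases lt_trichotomy x t with hlt | heq | hgt
    · rw [if_pos hlt.le]
      refine (hdL x).congr_of_eventuallyEq ?_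
      filter_upwards [Iio_mem_nhds hlt] with a ha
      simp only [hfdef]
      rw [if_pos (Set.mem_Iio.1 ha).le]
    · rw [heq, if_pos le_rfl]
      have h1 : HasDerivWithinAt f (Bs * Cl) (Set.Iic t) t := by
        refine ((hdL t).hasDerivWithinAt).congr (fun a ha => ?_) ?_
        · simp only [hfdef]; rw [if_pos (Set.mem_Iic.1 ha)]
        · simp only [hfdef]; rw [if_pos le_rfl]
      have hd2 : Bs * (Real.log (G / (Bs * t)) - 2) = Bs * Cl := by
        rw [hlogt]; ring
      have h2' := (hdh t (ne_of_gt htpos)).hasDerivWithinAt (s := Set.Ici t)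
      rw [hd2] at h2'
      have h2 : HasDerivWithinAt f (Bs * Cl) (Set.Ici t) t := by
        refine h2'.congr (fun a ha => ?_) ?_
        · rcases eq_or_lt_of_le (Set.mem_Ici.1 ha) with hat | hgt
          · simp only [hfdef]; rw [← hat, if_pos le_rfl, hLt]
          · simp only [hfdef]; rw [if_neg (not_le.mpr hgt)]
        · simp only [hfdef]; rw [if_pos le_rfl, hLt]
      have hu := h1.union h2
      rw [Set.Iic_union_Ici] at hu
      exact hasDerivWithinAt_univ.mp hu
    · rw [if_neg (not_le.mpr hgt)]
      refine (hdh x (ne_of_gt hx.1)).congr_of_eventuallyEq ?_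
      filter_upwards [Ioi_mem_nhds hgt] with a ha
      simp only [hfdef]
      rw [if_neg (not_le.mpr (Set.mem_Ioi.1 ha))]
  have hcont : ContinuousOn f (Set.Ioc (0 : ℝ) 1) :=
    fun x hx => (key x hx).continuousAt.continuousWithinAt
  refine ⟨hcont, ?_⟩
  refine strictMonoOn_of_deriv_pos (convex_Ioc 0 1) hcont ?_
  intro x hx
  rw [interior_Ioc] at hx
  have hxm : x ∈ Set.Ioc (0 : ℝ) 1 := ⟨hx.1, hx.2.le⟩
  rw [(key x hxm).deriv]
  by_cases hxt : x ≤ t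
  · rw [if_pos hxt]; positivity
  · rw [if_neg hxt]
    have hx0 : 0 < Bs * x := mul_pos hBpos hx.1
    have hlt : Bs * x < G * Real.exp (-2) := by
      have : Bs * x < Bs * 1 := mul_lt_mul_of_pos_left hx.2 hBpos
      nlinarith
    have h2 : Real.exp 2 < G / (Bs * x) := by
      have hGe : G / (G * Real.exp (-2)) = Real.exp 2 := by
        rw [Real.exp_neg]; field_simp
      calc Real.exp 2 = G / (G * Real.exp (-2)) := hGe.symm
        _ < G / (Bs * x) := div_lt_div_of_pos_left hG hx0 hlt
    have : (2 : ℝ) < Real.log (G / (Bs * x)) :=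
      (Real.lt_log_iff_exp_lt (by positivity)).2 h2
    have := sub_pos.2 this
    positivity
end

section
/- For any α ∈ [0,1], the equilibrium price with sensing, π*(α) = 1 + C_l if B_s^{L*}·α ≤ G·e^{−(2+C_l)} and π*(α) = ln(G/(B_s^{L*}·α)) − 1 otherwise, satisfies π*(α) ≤ 1 + C_l; consequently each user's equilibrium payoff g_i·e^{−(1+π*(α))} is at least the baseline payoff g_i·e^{−(2+C_l)}. -/
/-- For any `α ∈ [0,1]`, the equilibrium price with sensing
(`1 + C_l` if `B_s^{L*}·α ≤ G·e^{−(2+C_l)}`, else `ln(G/(B_s^{L*}·α)) − 1`)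
is at most `1 + C_l`; consequently each user's equilibrium payoff
`g_i·e^{−(1+π*(α))}` is at least the baseline payoff `g_i·e^{−(2+C_l)}`. -/
theorem stmt_15 (G Cl Bs gi : ℝ) (hG : 0 < G) (hCl : 0 < Cl) (hgi : 0 < gi)
    (hBs : Bs ∈ Set.Icc (G * Real.exp (-(2 + Cl))) (G * Real.exp (-2))) :
    ∀ α ∈ Set.Icc (0 : ℝ) 1,
      (if Bs * α ≤ G * Real.exp (-(2 + Cl)) then 1 + Cl
        else Real.log (G / (Bs * α)) - 1) ≤ 1 + Cl ∧
      gi * Real.exp (-(1 + (if Bs * α ≤ G * Real.exp (-(2 + Cl)) then 1 + Cl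
          else Real.log (G / (Bs * α)) - 1))) ≥
        gi * Real.exp (-(2 + Cl)) := by
  intro α hα
  have hprice : (if Bs * α ≤ G * Real.exp (-(2 + Cl)) then 1 + Cl
      else Real.log (G / (Bs * α)) - 1) ≤ 1 + Cl := by
    split_ifs with h
    · exact le_rfl
    · push_neg at h
      have hpos : 0 < Bs * α :=
        lt_trans (by positivity) h
      have hdiv : G / (Bs * α) ≤ Real.exp (2 + Cl) := by
        rw [div_le_iff₀ hpos]
        have := h.le
        calc G = G * Real.exp (-(2 + Cl)) * Real.exp (2 + Cl) := by
              rw [mul_assoc, ← Real.exp_add, neg_add_cancel, Real.exp_zero, mul_one]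
          _ ≤ Bs * α * Real.exp (2 + Cl) := by
              nlinarith [Real.exp_pos (2 + Cl)]
          _ = Real.exp (2 + Cl) * (Bs * α) := by ring
      have hlog : Real.log (G / (Bs * α)) ≤ 2 + Cl := by
        calc Real.log (G / (Bs * α)) ≤ Real.log (Real.exp (2 + Cl)) :=
              Real.log_le_log (by positivity) hdiv
          _ = 2 + Cl := Real.log_exp _
      linarith
  refine ⟨hprice, ?_⟩
  have : Real.exp (-(2 + Cl)) ≤ Real.exp (-(1 + (if Bs * α ≤ G * Real.exp (-(2 + Cl)) then 1 + Cl else Real.log (G / (Bs * α)) - 1))) :=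
    Real.exp_le_exp.mpr (by linarith)
  exact mul_le_mul_of_nonneg_left this hgi.le
end

section
/- In the general SNR regime, the optimal demand of a user maximizing u(π,w) = w·ln(1 + g/w) − π·w over w > 0 is w*(π) = g/Q(π), where Q(π) is the unique positive solution of ln(1+Q) − Q/(1+Q) = π; the resulting SNR g/w*(π) = Q(π) is independent of g, and the optimal payoff (g/Q(π))·(ln(1+Q(π)) − π) = g/(1+Q(π)) is linear in g. -/
/-- In the general SNR regime, if `Q > 0` solves `ln(1+Q) − Q/(1+Q) = π`, then the
optimal demand of a user maximizing `w·ln(1 + g/w) − π·w` over `w > 0` is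
`w* = g/Q`; the resulting SNR `g/w* = Q` is independent of `g`, and the optimal
payoff `(g/Q)·(ln(1+Q) − π) = g/(1+Q)` is linear in `g`. -/
theorem stmt_18 (g π Q : ℝ) (hg : 0 < g) (hπ : 0 < π) (hQ : 0 < Q)
    (hsol : Real.log (1 + Q) - Q / (1 + Q) = π) :
    IsMaxOn (fun w : ℝ => w * Real.log (1 + g / w) - π * w)
      (Set.Ioi (0 : ℝ)) (g / Q) ∧
    g / (g / Q) = Q ∧
    (g / Q) * (Real.log (1 + Q) - π) = g / (1 + Q) := by
  have h1Q : (0:ℝ) < 1 + Q := by linarith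
  have hlin : (g / Q) * (Real.log (1 + Q) - π) = g / (1 + Q) := by
    have : Real.log (1 + Q) - π = Q / (1 + Q) := by linarith
    rw [this]; field_simp
  have hsnr : g / (g / Q) = Q := by
    field_simp
  have hwstar : (g / Q) * Real.log (1 + g / (g / Q)) - π * (g / Q) = g / (1 + Q) := by
    rw [hsnr]; linarith [hlin]
  refine ⟨?_, hsnr, hlin⟩
  intro w hw
  simp only [Set.mem_Ioi] at hw
  have htpos : 0 < g / w := div_pos hg hw
  have h1t : (0:ℝ) < 1 + g / w := by linarith
  have key : Real.log (1 + g / w) - π ≤ (g / w) / (1 + Q) := by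
    have hlog : Real.log ((1 + g/w) / (1 + Q)) ≤ (1 + g/w) / (1 + Q) - 1 :=
      Real.log_le_sub_one_of_pos (div_pos h1t h1Q)
    rw [Real.log_div h1t.ne' h1Q.ne'] at hlog
    have heq : (1 + g/w) / (1 + Q) - 1 = (g/w - Q) / (1 + Q) := by
      field_simp; ring
    rw [heq] at hlog
    have hQdiv : Real.log (1 + Q) = π + Q / (1 + Q) := by linarith
    have hsplit : (g/w - Q) / (1 + Q) = (g/w)/(1+Q) - Q/(1+Q) := by ring
    linarith [hlog, hsplit.le]
  show w * Real.log (1 + g / w) - π * w ≤ (g / Q) * Real.log (1 + g / (g / Q)) - π * (g / Q)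
  rw [hwstar]
  have hmul : w * (Real.log (1 + g / w) - π) ≤ w * ((g / w) / (1 + Q)) :=
    mul_le_mul_of_nonneg_left key hw.le
  have hwg : w * ((g / w) / (1 + Q)) = g / (1 + Q) := by
    field_simp
  nlinarith [hmul, hwg]
end
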